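/- Let a, b, c be three non-collinear points in the plane. If O is the midpoint of the segment ac, then O is an admissible center for {a,b,c}: the set {a, b, c, 2O - b} is in convex position (a and c are fixed by the reflection). -/

import Mathlib

noncomputable section

abbrev Pt := EuclideanSpace ℝ (Fin 2)

/-- A set of points is in convex position if every point is an extreme point
of the convex hull of the set. -/
def InConvexPos (S : Set Pt) : Prop :=
  ∀ p ∈ S, p ∈ Set.extremePoints ℝ (convexHull ℝ S)

/-- The reflection of the set `S` through the point `O`. -/
def reflSet (O : Pt) (S : Set Pt) : Set Pt := (fun x => (2 : ℝ) • O - x) '' S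

/-- `O` is an admissible center for `S` if `S ∪ (2O - S)` is in convex position. -/
def AdmissibleCenter (O : Pt) (S : Set Pt) : Prop := InConvexPos (S ∪ reflSet O S)

/-- A set is in centrally symmetric convex position if it admits an admissible center. -/
def CSCPos (S : Set Pt) : Prop := ∃ O : Pt, AdmissibleCenter O S

lemma extreme_of_not_mem_hull {S : Set Pt} {x : Pt} (hx : x ∈ S)
    (hne : (S \ {x}).Nonempty) (h : x ∉ convexHull ℝ (S \ {x})) :
    x ∈ Set.extremePoints ℝ (convexHull ℝ S) := by
  have hK : Convex ℝ (convexHull ℝ (S \ {x})) := convex_convexHull ℝ _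
  have hS : convexHull ℝ S = convexJoin ℝ {x} (convexHull ℝ (S \ {x})) := by
    rw [← convexHull_insert hne, Set.insert_diff_singleton, Set.insert_eq_self.2 hx]
  refine mem_extremePoints.2 ⟨subset_convexHull ℝ S hx, ?_⟩
  intro x₁ hx₁ x₂ hx₂ hseg
  rw [hS, mem_convexJoin] at hx₁ hx₂
  obtain ⟨p₁, hp₁, z₁, hz₁, hxz₁⟩ := hx₁
  obtain ⟨p₂, hp₂, z₂, hz₂, hxz₂⟩ := hx₂
  rw [Set.mem_singleton_iff] at hp₁ hp₂
  rw [hp₁] at hxz₁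
  rw [hp₂] at hxz₂
  obtain ⟨a₁, b₁, ha₁, hb₁, hab₁, h1⟩ := hxz₁
  obtain ⟨a₂, b₂, ha₂, hb₂, hab₂, h2⟩ := hxz₂
  obtain ⟨t, s, ht, hs, hts, hx0⟩ := hseg
  rw [← h1, ← h2] at hx0
  set C := t * b₁ + s * b₂ with hC
  clear_value C
  have hx' : (t * a₁ + s * a₂) • x + ((t * b₁) • z₁ + (s * b₂) • z₂) = x := by
    calc (t * a₁ + s * a₂) • x + ((t * b₁) • z₁ + (s * b₂) • z₂)
        = t • (a₁ • x + b₁ • z₁) + s • (a₂ • x + b₂ • z₂) := by module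
      _ = x := hx0
  have e1 : t * a₁ + t * b₁ = t := by rw [← mul_add, hab₁, mul_one]
  have e2 : s * a₂ + s * b₂ = s := by rw [← mul_add, hab₂, mul_one]
  have hsum : (t * a₁ + s * a₂) + C = 1 := by rw [hC]; linarith
  have key : C • x = (t * b₁) • z₁ + (s * b₂) • z₂ := by
    have h1C : (1 : ℝ) - C = t * a₁ + s * a₂ := by linarith
    calc C • x = x - ((1 : ℝ) - C) • x := by
          rw [sub_smul, one_smul, sub_sub_cancel]
      _ = x - (t * a₁ + s * a₂) • x := by rw [h1C]
      _ = (t * b₁) • z₁ + (s * b₂) • z₂ := (eq_sub_of_add_eq' hx').symm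
  have hCnn : 0 ≤ C := by rw [hC]; positivity
  rcases eq_or_lt_of_le hCnn with hC0 | hCpos
  · have p1 : t * b₁ = 0 := by
      linarith [mul_nonneg ht.le hb₁, mul_nonneg hs.le hb₂]
    have p2 : s * b₂ = 0 := by
      linarith [mul_nonneg ht.le hb₁, mul_nonneg hs.le hb₂]
    have hb₁0 : b₁ = 0 := (mul_eq_zero.1 p1).resolve_left (ne_of_gt ht)
    have hb₂0 : b₂ = 0 := (mul_eq_zero.1 p2).resolve_left (ne_of_gt hs)
    have ha₁1 : a₁ = 1 := by linarith
    have ha₂1 : a₂ = 1 := by linarith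
    constructor
    · rw [← h1, hb₁0, ha₁1]; simp
    · rw [← h2, hb₂0, ha₂1]; simp
  · exfalso
    have hCne : C ≠ 0 := ne_of_gt hCpos
    have hxeq : x = (t * b₁ / C) • z₁ + (s * b₂ / C) • z₂ := by
      have : x = C⁻¹ • ((t * b₁) • z₁ + (s * b₂) • z₂) := by
        rw [← key, smul_smul, inv_mul_cancel₀ hCne, one_smul]
      rw [this, smul_add, smul_smul, smul_smul, div_eq_inv_mul, div_eq_inv_mul]
    refine h ?_
    have hmem : (t * b₁ / C) • z₁ + (s * b₂ / C) • z₂ ∈ convexHull ℝ (S \ {x}) := by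
      refine hK hz₁ hz₂ ?_ ?_ ?_
      · positivity
      · positivity
      · rw [← add_div, ← hC, div_self hCne]
    rwa [← hxeq] at hmem

lemma linIndep_of_not_collinear {a b c : Pt} (hnc : ¬ Collinear ℝ ({a, b, c} : Set Pt)) :
    LinearIndependent ℝ ![b - a, c - a] := by
  rw [LinearIndependent.pair_iff]
  intro s t hst
  by_contra hcon
  apply hnc
  rw [collinear_iff_exists_forall_eq_smul_vadd]
  rcases (not_and_or.1 hcon) with hs | ht
  · refine ⟨a, c - a, ?_⟩
    intro p hp
    rcases hp with h | h | h <;> rw [h]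
    · exact ⟨0, by simp⟩
    · refine ⟨-(t/s), ?_⟩
      have : b - a = -(t/s) • (c - a) := by
        have hs0 : s ≠ 0 := hs
        have := congrArg (fun w => s⁻¹ • w) hst
        simp only [smul_add, smul_smul, smul_zero] at this
        rw [inv_mul_cancel₀ hs0, one_smul] at this
        have h2 : b - a = -(s⁻¹ * t) • (c - a) := by
          rw [neg_smul, ← smul_smul]
          have := eq_neg_of_add_eq_zero_left this
          rw [this]; module
        rw [h2]; congr 1; field_simp
      simp [vadd_eq_add, ← this]
    · exact ⟨1, by simp⟩
  · refine ⟨a, b - a, ?_⟩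
    intro p hp
    rcases hp with h | h | h <;> rw [h]
    · exact ⟨0, by simp⟩
    · exact ⟨1, by simp⟩
    · refine ⟨-(s/t), ?_⟩
      have : c - a = -(s/t) • (b - a) := by
        have ht0 : t ≠ 0 := ht
        have := congrArg (fun w => t⁻¹ • w) hst
        simp only [smul_add, smul_smul, smul_zero] at this
        rw [inv_mul_cancel₀ ht0] at this
        have h2 : c - a = -(t⁻¹ * s) • (b - a) := by
          rw [neg_smul, ← smul_smul]
          have := eq_neg_of_add_eq_zero_right this
          rw [one_smul] at this
          rw [this]; module
        rw [h2]; congr 1; field_simp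
      simp [vadd_eq_add, ← this]

lemma exists_dual {u v : Pt} (h : LinearIndependent ℝ ![u, v]) (α β : ℝ) :
    ∃ f : Pt →ₗ[ℝ] ℝ, f u = α ∧ f v = β := by
  have hcard : Fintype.card (Fin 2) = Module.finrank ℝ Pt := by simp
  let B := basisOfLinearIndependentOfCardEqFinrank h hcard
  have hB : ∀ i, B i = ![u, v] i := fun i => by
    simp [B, coe_basisOfLinearIndependentOfCardEqFinrank]
  refine ⟨α • B.coord 0 + β • B.coord 1, ?_, ?_⟩
  · have : u = B 0 := by rw [hB]; simp
    rw [this]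
    simp [Module.Basis.coord_apply, Module.Basis.repr_self, Finsupp.single_apply]
  · have : v = B 1 := by rw [hB]; simp
    rw [this]
    simp [Module.Basis.coord_apply, Module.Basis.repr_self, Finsupp.single_apply]

lemma not_mem_hull_of_sep {x : Pt} {T : Set Pt} (f : Pt →ₗ[ℝ] ℝ)
    (hsep : ∀ y ∈ T, f y < f x) : x ∉ convexHull ℝ T := by
  intro hx
  have hcvx : Convex ℝ {w : Pt | f w < f x} := convex_halfSpace_lt (LinearMap.isLinear f) (f x)
  have hT : T ⊆ {w : Pt | f w < f x} := fun y hy => hsep y hy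
  have hsub : convexHull ℝ T ⊆ {w : Pt | f w < f x} := convexHull_min hT hcvx
  have hlt : f x < f x := hsub hx
  exact lt_irrefl _ hlt

theorem stmt5 (a b c : Pt) (hnc : ¬ Collinear ℝ {a, b, c}) :
    InConvexPos {a, b, c, (2 : ℝ) • (midpoint ℝ a c) - b} := by
  have hli := linIndep_of_not_collinear hnc
  set d : Pt := (2 : ℝ) • (midpoint ℝ a c) - b with hddef
  have hd : d = a + c - b := by
    rw [hddef, midpoint_eq_smul_add, smul_smul]
    norm_num
  -- distinctness facts
  have hab : a ≠ b := by
    rintro rfl; exact hnc (by simpa using collinear_pair ℝ a c)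
  have hbc : b ≠ c := by
    rintro rfl; exact hnc (by
      have : ({a, b, b} : Set Pt) = {a, b} := by
        ext x; simp [or_comm, or_assoc]
      rw [this]; exact collinear_pair ℝ a b)
  have had : a ≠ d := by
    intro h
    apply hbc
    rw [hd] at h
    have : b = c := by
      have := congrArg (fun w => w + b - a) h
      simpa using this
    exact this
  -- separation data
  have hfd : ∀ y : Pt, y ∈ ({a, b, c, d} : Set Pt) → ∀ f : Pt →ₗ[ℝ] ℝ,
      f y - f a = f (y - a) := fun y _ f => (map_sub f y a).symm
  have hdsub : d - a = (c - a) - (b - a) := by rw [hd]; module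
  -- the four extreme point claims
  intro p hp
  have hS : ({a, b, c, d} : Set Pt) = insert a {b, c, d} := rfl
  rcases hp with h | h | h | h <;> rw [h]
  · -- p = a
    obtain ⟨f, hfu, hfv⟩ := exists_dual hli (-1) (-2)
    refine extreme_of_not_mem_hull (by simp) ⟨b, by simp [hab], Ne.symm hab⟩ ?_
    intro hmem
    have hsubset : ({a, b, c, d} : Set Pt) \ {a} ⊆ {b, c, d} := by
      intro x hx
      rcases hx.1 with rfl | rfl | rfl | rfl
      · exact absurd rfl hx.2
      · simp
      · simp
      · simp
    refine not_mem_hull_of_sep (T := {b, c, d}) f ?_ (convexHull_mono hsubset hmem)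
    intro y hy
    have h1 : f b - f a = -1 := by rw [← map_sub, hfu]
    have h2 : f c - f a = -2 := by rw [← map_sub, hfv]
    have h3 : f d - f a = -1 := by
      rw [← map_sub, hdsub, map_sub, hfu, hfv]; norm_num
    rcases hy with rfl | rfl | rfl <;> linarith
  · -- p = b
    obtain ⟨f, hfu, hfv⟩ := exists_dual hli 1 0
    refine extreme_of_not_mem_hull (by simp) ⟨a, by simp, hab⟩ ?_
    intro hmem
    have hsubset : ({a, b, c, d} : Set Pt) \ {b} ⊆ {a, c, d} := by
      intro x hx
      rcases hx.1 with rfl | rfl | rfl | rfl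
      · simp
      · exact absurd rfl hx.2
      · simp
      · simp
    refine not_mem_hull_of_sep (T := {a, c, d}) f ?_ (convexHull_mono hsubset hmem)
    intro y hy
    have h1 : f b - f a = 1 := by rw [← map_sub, hfu]
    have h2 : f c - f a = 0 := by rw [← map_sub, hfv]
    have h3 : f d - f a = -1 := by
      rw [← map_sub, hdsub, map_sub, hfu, hfv]; norm_num
    rcases hy with rfl | rfl | rfl <;> linarith
  · -- p = c
    have hac : a ≠ c := by
      intro h
      apply hnc
      rw [h]
      have he : ({c, b, c} : Set Pt) = {b, c} := by ext x; simp
      rw [he]; exact collinear_pair ℝ b c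
    obtain ⟨f, hfu, hfv⟩ := exists_dual hli 1 2
    refine extreme_of_not_mem_hull (by simp) ⟨a, by simp, hac⟩ ?_
    intro hmem
    have hsubset : ({a, b, c, d} : Set Pt) \ {c} ⊆ {a, b, d} := by
      intro x hx
      rcases hx.1 with rfl | rfl | rfl | rfl
      · simp
      · simp
      · exact absurd rfl hx.2
      · simp
    refine not_mem_hull_of_sep (T := {a, b, d}) f ?_ (convexHull_mono hsubset hmem)
    intro y hy
    have h1 : f b - f a = 1 := by rw [← map_sub, hfu]
    have h2 : f c - f a = 2 := by rw [← map_sub, hfv]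
    have h3 : f d - f a = 1 := by
      rw [← map_sub, hdsub, map_sub, hfu, hfv]; norm_num
    rcases hy with rfl | rfl | rfl <;> linarith
  · -- p = d
    obtain ⟨f, hfu, hfv⟩ := exists_dual hli (-1) 0
    refine extreme_of_not_mem_hull (by simp) ⟨a, by simp, had⟩ ?_
    intro hmem
    have hsubset : ({a, b, c, d} : Set Pt) \ {d} ⊆ {a, b, c} := by
      intro x hx
      rcases hx.1 with rfl | rfl | rfl | rfl
      · simp
      · simp
      · simp
      · exact absurd rfl hx.2
    refine not_mem_hull_of_sep (T := {a, b, c}) f ?_ (convexHull_mono hsubset hmem)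
    intro y hy
    have h1 : f b - f a = -1 := by rw [← map_sub, hfu]
    have h2 : f c - f a = 0 := by rw [← map_sub, hfv]
    have h3 : f d - f a = 1 := by
      rw [← map_sub, hdsub, map_sub, hfu, hfv]; norm_num
    rcases hy with rfl | rfl | rfl <;> linarith
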